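/- Let ψ : ℝ^D → ℝ be a differentiable convex function whose gradient is Lipschitz with constant B > 0, and let φ : ℝ^D → ℝ be a differentiable convex function. Suppose ∫ ‖∇ψ(x) − ∇ψ*(x)‖² dP(x) ≤ ε_X and ∫ ‖∇φ(y) − ∇φ*(y)‖² dQ(y) ≤ ε_Y for some ε_X, ε_Y ≥ 0, and let λ > 0. Then the regularized correlations satisfy Corr(P, Q | ψ, φ; λ) ≤ Corr(P, Q) + (λ/2)(B√ε_Y + √ε_X)² + (B√ε_Y + √ε_X)·√ε_Y + (B/2)·ε_Y. -/

import Mathlib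

open MeasureTheory ENNReal
open scoped RealInnerProductSpace

private lemma convex_grad_ineq {F : Type*} [NormedAddCommGroup F] [InnerProductSpace ℝ F]
    [CompleteSpace F] {f : F → ℝ} (hf : Differentiable ℝ f) (hc : ConvexOn ℝ Set.univ f)
    (a b : F) : f a - f b ≤ ⟪gradient f a, a - b⟫ := by
  set L : ℝ → F := fun t => b + t • (a - b) with hLdef
  have hL : ∀ t : ℝ, HasDerivAt L (a - b) t := fun t => by
    have h := ((hasDerivAt_id t).smul_const (a - b)).const_add b
    rw [one_smul] at h; exact h
  have hder : ∀ t : ℝ, HasDerivAt (fun s => f (L s)) ⟪gradient f (L t), a - b⟫ t := by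
    intro t
    have h1 : HasFDerivAt f (InnerProductSpace.toDual ℝ F (gradient f (L t))) (L t) :=
      ((hf (L t)).hasGradientAt).hasFDerivAt
    have h2 := h1.comp_hasDerivAt t (hL t)
    rw [InnerProductSpace.toDual_apply_apply] at h2; exact h2
  have hconv : ConvexOn ℝ Set.univ (fun s => f (L s)) := by
    refine ⟨convex_univ, fun x _ y _ p q hp hq hpq => ?_⟩
    have hLin : L (p * x + q * y) = p • L x + q • L y := by
      have h : p • L x + q • L y = (p + q) • b + (p * x + q * y) • (a - b) := by
        simp only [hLdef]; module
      rw [h, hpq, one_smul]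
    simp only [smul_eq_mul] at *
    rw [hLin]
    exact hc.2 (Set.mem_univ (L x)) (Set.mem_univ (L y)) hp hq hpq
  have h := hconv.slope_le_of_hasDerivAt (Set.mem_univ (0:ℝ)) (Set.mem_univ (1:ℝ))
      one_pos (hder 1)
  have hL1 : L 1 = a := by simp [hLdef]
  have hL0 : L 0 = b := by simp [hLdef]
  rw [slope_def_field, hL1, hL0] at h
  simpa using h

private lemma measurable_gradient_real {F : Type*} [NormedAddCommGroup F]
    [InnerProductSpace ℝ F] [CompleteSpace F] [MeasurableSpace F] [BorelSpace F]
    (f : F → ℝ) : Measurable (gradient f) :=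
  ((InnerProductSpace.toDual ℝ F).symm.continuous.measurable).comp (measurable_fderiv ℝ f)

private lemma integral_mul_le_sqrt {α : Type*} [MeasurableSpace α] {μ : Measure α}
    {f g : α → ℝ} (hfm : AEStronglyMeasurable f μ) (hgm : AEStronglyMeasurable g μ)
    (hf0 : ∀ a, 0 ≤ f a) (hg0 : ∀ a, 0 ≤ g a)
    (hf2 : Integrable (fun a => f a ^ 2) μ) (hg2 : Integrable (fun a => g a ^ 2) μ) :
    ∫ a, f a * g a ∂μ ≤ Real.sqrt (∫ a, f a ^ 2 ∂μ) * Real.sqrt (∫ a, g a ^ 2 ∂μ) := by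
  have hpq : Real.HolderConjugate 2 2 := Real.holderConjugate_iff.2 ⟨one_lt_two, by norm_num⟩
  have hfmem : MemLp f (ENNReal.ofReal 2) μ := by
    simpa using (memLp_two_iff_integrable_sq hfm).2 hf2
  have hgmem : MemLp g (ENNReal.ofReal 2) μ := by
    simpa using (memLp_two_iff_integrable_sq hgm).2 hg2
  have h := integral_mul_le_Lp_mul_Lq_of_nonneg hpq (Filter.Eventually.of_forall hf0)
      (Filter.Eventually.of_forall hg0) hfmem hgmem
  have hrp : ∀ x : ℝ, x ^ (2:ℝ) = x ^ 2 := fun x => by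
    rw [show (2:ℝ) = ((2:ℕ):ℝ) by norm_num, Real.rpow_natCast]
  simp_rw [hrp, Real.sqrt_eq_rpow] at h ⊢
  exact h


set_option maxHeartbeats 1000000 in
/-- Approximability of correlations: if `∇ψ` is `ε_X`-close to `∇ψ*` and `∇φ` is
`ε_Y`-close to `∇φ*` in the `L²` sense, then the regularized correlations are
within `(λ/2)(B√ε_Y + √ε_X)² + (B√ε_Y + √ε_X)√ε_Y + (B/2)ε_Y` of the true ones. -/
theorem regularized_corr_approximability {D : ℕ}
    (P Q : Measure (EuclideanSpace ℝ (Fin D)))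
    [IsProbabilityMeasure P] [IsProbabilityMeasure Q]
    (hP2 : Integrable (fun x => ‖x‖ ^ 2) P)
    (hQ2 : Integrable (fun y => ‖y‖ ^ 2) Q)
    -- Brenier potentials
    (ψs φs : EuclideanSpace ℝ (Fin D) → ℝ)
    (hψs : Differentiable ℝ ψs) (hψsc : ConvexOn ℝ Set.univ ψs)
    (hφs : Differentiable ℝ φs) (hφsc : ConvexOn ℝ Set.univ φs)
    (hinv : ∀ y, gradient ψs (gradient φs y) = y)
    (hQP : Q.map (gradient φs) = P)
    (hPQ : P.map (gradient ψs) = Q)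
    -- approximating pair of convex potentials
    (ψ : EuclideanSpace ℝ (Fin D) → ℝ) (hψ : Differentiable ℝ ψ)
    (hψc : ConvexOn ℝ Set.univ ψ)
    (B : ℝ) (hB : 0 < B)
    (hBLip : ∀ x x', ‖gradient ψ x - gradient ψ x'‖ ≤ B * ‖x - x'‖)
    (φ : EuclideanSpace ℝ (Fin D) → ℝ) (hφ : Differentiable ℝ φ)
    (hφc : ConvexOn ℝ Set.univ φ)
    -- closedness in `L²` sense
    (εX εY : ℝ) (hεX : 0 ≤ εX) (hεY : 0 ≤ εY)
    (hIX : Integrable (fun x => ‖gradient ψ x - gradient ψs x‖ ^ 2) P)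
    (hX : (∫ x, ‖gradient ψ x - gradient ψs x‖ ^ 2 ∂P) ≤ εX)
    (hIY : Integrable (fun y => ‖gradient φ y - gradient φs y‖ ^ 2) Q)
    (hY : (∫ y, ‖gradient φ y - gradient φs y‖ ^ 2 ∂Q) ≤ εY)
    (lam : ℝ) (hlam : 0 < lam)
    -- integrability of all the integrals involved
    (hI1 : Integrable ψ P)
    (hI2 : Integrable (fun y => ⟪gradient φ y, y⟫ - ψ (gradient φ y)) Q)
    (hI3 : Integrable (fun y => ‖gradient ψ (gradient φ y) - y‖ ^ 2) Q)
    (hI4 : Integrable (fun y => ⟪y, gradient φs y⟫) Q) :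
    (∫ x, ψ x ∂P) + (∫ y, (⟪gradient φ y, y⟫ - ψ (gradient φ y)) ∂Q)
        + lam / 2 * (∫ y, ‖gradient ψ (gradient φ y) - y‖ ^ 2 ∂Q) ≤
      (∫ y, ⟪y, gradient φs y⟫ ∂Q)
        + lam / 2 * (B * Real.sqrt εY + Real.sqrt εX) ^ 2
        + (B * Real.sqrt εY + Real.sqrt εX) * Real.sqrt εY
        + B / 2 * εY := by
  have mg : Measurable (gradient φ) := measurable_gradient_real φ
  have mgs : Measurable (gradient φs) := measurable_gradient_real φs
  have mGψs : Measurable (gradient ψs) := measurable_gradient_real ψs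
  have cGψ : Continuous (gradient ψ) := by
    have hlip : LipschitzWith (Real.toNNReal B) (gradient ψ) :=
      LipschitzWith.of_dist_le_mul fun x y => by
        rw [dist_eq_norm, dist_eq_norm, Real.coe_toNNReal B hB.le]
        exact hBLip x y
    exact hlip.continuous
  -- abbreviations
  set u : EuclideanSpace ℝ (Fin D) → EuclideanSpace ℝ (Fin D) :=
    fun y => gradient ψ (gradient φs y) - y with hu_def
  set Δ : EuclideanSpace ℝ (Fin D) → EuclideanSpace ℝ (Fin D) :=
    fun y => gradient φs y - gradient φ y with hΔ_def
  have mu : Measurable u := (cGψ.measurable.comp mgs).sub measurable_id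
  have mΔ : Measurable Δ := mgs.sub mg
  -- u y = (∇ψ - ∇ψs)(∇φs y)
  have hukey : ∀ y, u y = gradient ψ (gradient φs y) - gradient ψs (gradient φs y) := by
    intro y; rw [hu_def]; rw [hinv y]
  -- pushforward identity for ψ
  have hmap1 : ∫ x, ψ x ∂P = ∫ y, ψ (gradient φs y) ∂Q := by
    rw [← hQP, integral_map mgs.aemeasurable hψ.continuous.aestronglyMeasurable]
  have hψgs_int : Integrable (fun y => ψ (gradient φs y)) Q := by
    have h := hI1; rw [← hQP] at h
    exact (integrable_map_measure hψ.continuous.aestronglyMeasurable mgs.aemeasurable).1 h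
  -- ∫ ‖u‖² ≤ εX
  have mF : AEStronglyMeasurable (fun x => ‖gradient ψ x - gradient ψs x‖ ^ 2) (Q.map (gradient φs)) :=
    (((cGψ.measurable.sub mGψs).norm.pow_const 2)).aestronglyMeasurable
  have hu2int : Integrable (fun y => ‖u y‖ ^ 2) Q := by
    have h2 : Integrable ((fun x => ‖gradient ψ x - gradient ψs x‖ ^ 2) ∘ gradient φs) Q := by
      refine (integrable_map_measure mF mgs.aemeasurable).1 (by rwa [hQP])
    have heq : (fun y => ‖u y‖ ^ 2)
        = (fun x => ‖gradient ψ x - gradient ψs x‖ ^ 2) ∘ gradient φs := by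
      funext y; simp only [Function.comp_apply, hukey]
    rw [heq]; exact h2
  have hu2 : ∫ y, ‖u y‖ ^ 2 ∂Q ≤ εX := by
    have h1 : ∫ y, ‖u y‖ ^ 2 ∂Q = ∫ x, ‖gradient ψ x - gradient ψs x‖ ^ 2 ∂P := by
      rw [← hQP, integral_map mgs.aemeasurable mF]
      exact integral_congr_ae (Filter.Eventually.of_forall fun y => by simp only [hukey])
    rw [h1]; exact hX
  -- ∫ ‖Δ‖² ≤ εY
  have hΔswap : (fun y => ‖Δ y‖ ^ 2) = fun y => ‖gradient φ y - gradient φs y‖ ^ 2 := by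
    funext y; rw [hΔ_def]; rw [norm_sub_rev]
  have hΔ2int : Integrable (fun y => ‖Δ y‖ ^ 2) Q := by rw [hΔswap]; exact hIY
  have hΔ2 : ∫ y, ‖Δ y‖ ^ 2 ∂Q ≤ εY := by rw [hΔswap]; exact hY
  -- pointwise inequality from convexity
  have hpt : ∀ y, ψ (gradient φs y) + (⟪gradient φ y, y⟫ - ψ (gradient φ y))
      ≤ ⟪y, gradient φs y⟫ + ⟪u y, Δ y⟫ := by
    intro y
    have h1 : ψ (gradient φs y) - ψ (gradient φ y)
        ≤ ⟪gradient ψ (gradient φs y), Δ y⟫ :=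
      convex_grad_ineq hψ hψc (gradient φs y) (gradient φ y)
    have h2 : ⟪gradient ψ (gradient φs y), Δ y⟫ = ⟪y, Δ y⟫ + ⟪u y, Δ y⟫ := by
      rw [hu_def, inner_sub_left]; ring
    have h3 : ⟪y, Δ y⟫ = ⟪y, gradient φs y⟫ - ⟪gradient φ y, y⟫ := by
      rw [hΔ_def, inner_sub_right, real_inner_comm (gradient φ y) y]
    rw [h2, h3] at h1
    linarith
  -- integrability of inner products
  have hbd : Integrable (fun y => ‖u y‖ ^ 2 + ‖Δ y‖ ^ 2) Q := hu2int.add hΔ2int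
  have hnormInt : Integrable (fun y => ‖u y‖ * ‖Δ y‖) Q := by
    refine Integrable.mono' hbd
      ((mu.norm.mul mΔ.norm).aestronglyMeasurable)
      (Filter.Eventually.of_forall fun y => ?_)
    have h0u := norm_nonneg (u y); have h0Δ := norm_nonneg (Δ y)
    rw [Real.norm_of_nonneg (mul_nonneg h0u h0Δ)]
    nlinarith [sq_nonneg (‖u y‖ - ‖Δ y‖)]
  have hinnerInt : Integrable (fun y => ⟪u y, Δ y⟫) Q := by
    refine Integrable.mono' hnormInt ((mu.inner mΔ).aestronglyMeasurable)
      (Filter.Eventually.of_forall fun y => ?_)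
    exact abs_real_inner_le_norm (u y) (Δ y)
  -- Cauchy–Schwarz for ∫⟪u,Δ⟫
  have hCSuΔ : ∫ y, ‖u y‖ * ‖Δ y‖ ∂Q ≤ Real.sqrt εX * Real.sqrt εY := by
    have h2 := integral_mul_le_sqrt (μ := Q) mu.norm.aestronglyMeasurable
      mΔ.norm.aestronglyMeasurable (fun y => norm_nonneg _) (fun y => norm_nonneg _)
      hu2int hΔ2int
    refine h2.trans (mul_le_mul (Real.sqrt_le_sqrt hu2) (Real.sqrt_le_sqrt hΔ2)
      (Real.sqrt_nonneg _) (Real.sqrt_nonneg _))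
  have hCS : ∫ y, ⟪u y, Δ y⟫ ∂Q ≤ Real.sqrt εX * Real.sqrt εY := by
    refine (integral_mono hinnerInt hnormInt fun y => real_inner_le_norm _ _).trans hCSuΔ
  -- bound on the regularization term
  have hr : ∫ y, ‖gradient ψ (gradient φ y) - y‖ ^ 2 ∂Q
      ≤ (B * Real.sqrt εY + Real.sqrt εX) ^ 2 := by
    have hub : ∀ y, ‖gradient ψ (gradient φ y) - y‖ ^ 2
        ≤ B ^ 2 * ‖Δ y‖ ^ 2 + 2 * B * (‖u y‖ * ‖Δ y‖) + ‖u y‖ ^ 2 := by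
      intro y
      have h1 : ‖gradient ψ (gradient φ y) - y‖ ≤ B * ‖Δ y‖ + ‖u y‖ := by
        have hsplit : gradient ψ (gradient φ y) - y
            = (gradient ψ (gradient φ y) - gradient ψ (gradient φs y)) + u y := by
          rw [hu_def]; exact (sub_add_sub_cancel _ _ _).symm
        rw [hsplit]
        refine (norm_add_le _ _).trans (add_le_add_left ?_ _)
        calc ‖gradient ψ (gradient φ y) - gradient ψ (gradient φs y)‖
            ≤ B * ‖gradient φ y - gradient φs y‖ := hBLip _ _
          _ = B * ‖Δ y‖ := by rw [hΔ_def, norm_sub_rev]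
      nlinarith [norm_nonneg (gradient ψ (gradient φ y) - y), norm_nonneg (Δ y),
        norm_nonneg (u y), hB.le]
    have hint1 : Integrable (fun y => B ^ 2 * ‖Δ y‖ ^ 2) Q := hΔ2int.const_mul _
    have hint2 : Integrable (fun y => 2 * B * (‖u y‖ * ‖Δ y‖)) Q := hnormInt.const_mul _
    have hint12 : Integrable (fun y => B ^ 2 * ‖Δ y‖ ^ 2 + 2 * B * (‖u y‖ * ‖Δ y‖)) Q :=
      hint1.add hint2
    have hRHSint : Integrable
        (fun y => B ^ 2 * ‖Δ y‖ ^ 2 + 2 * B * (‖u y‖ * ‖Δ y‖) + ‖u y‖ ^ 2) Q :=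
      hint12.add hu2int
    have h := integral_mono hI3 hRHSint hub
    rw [integral_add hint12 hu2int, integral_add hint1 hint2,
      integral_const_mul, integral_const_mul] at h
    have hsX : Real.sqrt εX ^ 2 = εX := Real.sq_sqrt hεX
    have hsY : Real.sqrt εY ^ 2 = εY := Real.sq_sqrt hεY
    have e1 : B ^ 2 * (∫ y, ‖Δ y‖ ^ 2 ∂Q) ≤ B ^ 2 * εY :=
      mul_le_mul_of_nonneg_left hΔ2 (sq_nonneg B)
    have e2 : 2 * B * (∫ y, ‖u y‖ * ‖Δ y‖ ∂Q) ≤ 2 * B * (Real.sqrt εX * Real.sqrt εY) :=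
      mul_le_mul_of_nonneg_left hCSuΔ (by positivity)
    nlinarith [h, e1, e2, hu2, hsX, hsY]
  -- assemble
  have hsum : (∫ x, ψ x ∂P) + (∫ y, (⟪gradient φ y, y⟫ - ψ (gradient φ y)) ∂Q)
      = ∫ y, (ψ (gradient φs y) + (⟪gradient φ y, y⟫ - ψ (gradient φ y))) ∂Q := by
    rw [hmap1, ← integral_add hψgs_int hI2]
  have hmain : ∫ y, (ψ (gradient φs y) + (⟪gradient φ y, y⟫ - ψ (gradient φ y))) ∂Q
      ≤ (∫ y, ⟪y, gradient φs y⟫ ∂Q) + ∫ y, ⟪u y, Δ y⟫ ∂Q := by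
    rw [← integral_add hI4 hinnerInt]
    exact integral_mono (hψgs_int.add hI2) (hI4.add hinnerInt) hpt
  have hlam2 : lam / 2 * (∫ y, ‖gradient ψ (gradient φ y) - y‖ ^ 2 ∂Q)
      ≤ lam / 2 * (B * Real.sqrt εY + Real.sqrt εX) ^ 2 :=
    mul_le_mul_of_nonneg_left hr (by positivity)
  have hlast : Real.sqrt εX * Real.sqrt εY
      ≤ (B * Real.sqrt εY + Real.sqrt εX) * Real.sqrt εY + B / 2 * εY := by
    have hsY : Real.sqrt εY ^ 2 = εY := Real.sq_sqrt hεY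
    nlinarith [Real.sqrt_nonneg εX, Real.sqrt_nonneg εY, hB.le, hεY]
  linarith [hsum, hmain, hCS, hlam2, hlast]
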